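/- arXiv:2111.09903 — 4 statements merged into one kernel-verified Lean document; each statement's English description precedes it below -/
import Mathlib

section
/- Let r₀ > 0, let Z₀ : ℝ → ℝ be differentiable, and let f : ℝ → ℝ be differentiable. Define F(r,t) = f(r³ + 3 Z₀(t) r₀²)/r² for r > 0, t ∈ ℝ. Then F satisfies the transport equation ∂F/∂t(r,t) − Z₀'(t) (r₀²/r²) ∂F/∂r(r,t) = 2 Z₀'(t) (r₀²/r³) F(r,t) for all r > 0 and t ∈ ℝ. (This is the general solution of the evolution equation for the radial elastic deformation component F_e,rr in the spherical accretion problem.) -/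
/-- The general solution `F(r,t) = f(r³ + 3 Z₀(t) r₀²)/r²` satisfies the transport
equation `∂F/∂t − Ż₀ (r₀²/r²) ∂F/∂r = 2 Ż₀ (r₀²/r³) F` governing the radial elastic
deformation component `F_e,rr` in the spherical accretion problem. -/
theorem spherical_accretion_Frr_general_solution
    (r₀ : ℝ) (hr₀ : 0 < r₀)
    (Z₀ f : ℝ → ℝ) (hZ : Differentiable ℝ Z₀) (hf : Differentiable ℝ f)
    (F : ℝ → ℝ → ℝ)
    (hF : F = fun r t => f (r ^ 3 + 3 * Z₀ t * r₀ ^ 2) / r ^ 2) :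
    ∀ r > (0 : ℝ), ∀ t : ℝ,
      deriv (fun s => F r s) t
        - deriv Z₀ t * (r₀ ^ 2 / r ^ 2) * deriv (fun x => F x t) r
        = 2 * deriv Z₀ t * (r₀ ^ 2 / r ^ 3) * F r t := by
  intro r hr t
  subst hF
  have hrne : r ≠ 0 := ne_of_gt hr
  set u := r ^ 3 + 3 * Z₀ t * r₀ ^ 2 with hu
  -- t derivative
  have h1 : HasDerivAt (fun s => r ^ 3 + 3 * Z₀ s * r₀ ^ 2)
      (3 * deriv Z₀ t * r₀ ^ 2) t := by
    have := ((hZ t).hasDerivAt.const_mul 3).mul_const (r₀ ^ 2)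
    simpa using this.const_add (r ^ 3)
  have hft : HasDerivAt (fun s => f (r ^ 3 + 3 * Z₀ s * r₀ ^ 2))
      (deriv f u * (3 * deriv Z₀ t * r₀ ^ 2)) t :=
    (hf u).hasDerivAt.comp t h1
  have hFt : HasDerivAt (fun s => f (r ^ 3 + 3 * Z₀ s * r₀ ^ 2) / r ^ 2)
      (deriv f u * (3 * deriv Z₀ t * r₀ ^ 2) / r ^ 2) t := hft.div_const _
  -- r derivative
  have h2 : HasDerivAt (fun x : ℝ => x ^ 3 + 3 * Z₀ t * r₀ ^ 2) (3 * r ^ 2) r := by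
    simpa using (hasDerivAt_pow 3 r).add_const (3 * Z₀ t * r₀ ^ 2)
  have hfr : HasDerivAt (fun x => f (x ^ 3 + 3 * Z₀ t * r₀ ^ 2))
      (deriv f u * (3 * r ^ 2)) r := (hf u).hasDerivAt.comp r h2
  have hden : HasDerivAt (fun x : ℝ => x ^ 2) (2 * r) r := by
    simpa using hasDerivAt_pow 2 r
  have hFr : HasDerivAt (fun x => f (x ^ 3 + 3 * Z₀ t * r₀ ^ 2) / x ^ 2)
      ((deriv f u * (3 * r ^ 2) * r ^ 2 - f u * (2 * r)) / (r ^ 2) ^ 2) r :=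
    hfr.div hden (pow_ne_zero 2 hrne)
  rw [hFt.deriv, hFr.deriv]
  field_simp
  rw [hu]
  ring_nf
end

section
/- Let r₀ > 0, let Z₀ : ℝ → ℝ be differentiable, and let g : ℝ → ℝ be differentiable. Define F(r,t) = r · g(r³ + 3 Z₀(t) r₀²) for r > 0, t ∈ ℝ. Then F satisfies the transport equation ∂F/∂t(r,t) − Z₀'(t) (r₀²/r²) ∂F/∂r(r,t) = −Z₀'(t) (r₀²/r³) F(r,t) for all r > 0 and t ∈ ℝ. (This is the general solution of the evolution equation for the hoop elastic deformation component F_e,θθ in the spherical accretion problem.) -/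
/-- The general solution `F(r,t) = r · g(r³ + 3 Z₀(t) r₀²)` satisfies the transport
equation `∂F/∂t − Ż₀ (r₀²/r²) ∂F/∂r = −Ż₀ (r₀²/r³) F` governing the hoop elastic
deformation component `F_e,θθ` in the spherical accretion problem. -/
theorem spherical_accretion_Ftt_general_solution
    (r₀ : ℝ) (hr₀ : 0 < r₀)
    (Z₀ g : ℝ → ℝ) (hZ : Differentiable ℝ Z₀) (hg : Differentiable ℝ g)
    (F : ℝ → ℝ → ℝ)
    (hF : F = fun r t => r * g (r ^ 3 + 3 * Z₀ t * r₀ ^ 2)) :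
    ∀ r > (0 : ℝ), ∀ t : ℝ,
      deriv (fun s => F r s) t
        - deriv Z₀ t * (r₀ ^ 2 / r ^ 2) * deriv (fun x => F x t) r
        = -(deriv Z₀ t) * (r₀ ^ 2 / r ^ 3) * F r t := by
  subst hF
  intro r hr t
  set u : ℝ := r ^ 3 + 3 * Z₀ t * r₀ ^ 2 with hu
  have hZt : HasDerivAt Z₀ (deriv Z₀ t) t := (hZ t).hasDerivAt
  have hgu : HasDerivAt g (deriv g u) u := (hg u).hasDerivAt
  -- t-derivative
  have hinner_t : HasDerivAt (fun s => r ^ 3 + 3 * Z₀ s * r₀ ^ 2)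
      (3 * deriv Z₀ t * r₀ ^ 2) t := by
    simpa using (((hZt.const_mul 3).mul_const (r₀ ^ 2)).const_add (r ^ 3))
  have hFt : HasDerivAt (fun s => r * g (r ^ 3 + 3 * Z₀ s * r₀ ^ 2))
      (r * (deriv g u * (3 * deriv Z₀ t * r₀ ^ 2))) t :=
    ((hgu.comp t hinner_t).const_mul r)
  -- r-derivative
  have hinner_r : HasDerivAt (fun x : ℝ => x ^ 3 + 3 * Z₀ t * r₀ ^ 2)
      (3 * r ^ 2) r := by
    simpa using ((hasDerivAt_pow 3 r).add_const (3 * Z₀ t * r₀ ^ 2))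
  have hFr : HasDerivAt (fun x => x * g (x ^ 3 + 3 * Z₀ t * r₀ ^ 2))
      (1 * g u + r * (deriv g u * (3 * r ^ 2))) r :=
    (hasDerivAt_id r).mul (hgu.comp r hinner_r)
  rw [hFt.deriv, hFr.deriv]
  have hr2 : (r:ℝ) ^ 2 ≠ 0 := pow_ne_zero _ hr.ne'
  have hr3 : (r:ℝ) ^ 3 ≠ 0 := pow_ne_zero _ hr.ne'
  rw [hu]
  field_simp
  ring
end

section
/- Let r₀ > 0, let Z₀ : ℝ → ℝ be differentiable with Z₀(0) = 0, and let F₀ : (0,∞) → ℝ be differentiable. Define F(r,t) = (r³ + 3 Z₀(t) r₀²)^{2/3} · F₀((r³ + 3 Z₀(t) r₀²)^{1/3}) / r² on the region D = {(r,t) : r > 0, r³ + 3 Z₀(t) r₀² > 0}. Then F satisfies ∂F/∂t − Z₀'(t)(r₀²/r²) ∂F/∂r = 2 Z₀'(t)(r₀²/r³) F on D, together with the initial condition F(r,0) = F₀(r) for all r > 0. (This is the solution of the F_e,rr transport equation in the part of the body occupied by the initial material.) -/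
/-- In the spherical accretion problem, the field
`F(r,t) = (r³ + 3 Z₀(t) r₀²)^(2/3) · F₀((r³ + 3 Z₀(t) r₀²)^(1/3)) / r²`
satisfies the transport equation `∂F/∂t − Ż₀(r₀²/r²) ∂F/∂r = 2 Ż₀(r₀²/r³) F`
on the region `{(r,t) : r > 0, r³ + 3 Z₀(t) r₀² > 0}`, together with the initial
condition `F(r,0) = F₀(r)` (the solution in the part occupied by initial material). -/
theorem spherical_accretion_Frr_initial_region
    (r₀ : ℝ) (hr₀ : 0 < r₀)
    (Z₀ : ℝ → ℝ) (hZ : Differentiable ℝ Z₀) (hZ0 : Z₀ 0 = 0)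
    (F₀ : ℝ → ℝ) (hF₀ : ∀ s > (0 : ℝ), DifferentiableAt ℝ F₀ s)
    (F : ℝ → ℝ → ℝ)
    (hF : F = fun r t => (r ^ 3 + 3 * Z₀ t * r₀ ^ 2) ^ ((2 : ℝ) / 3)
        * F₀ ((r ^ 3 + 3 * Z₀ t * r₀ ^ 2) ^ ((1 : ℝ) / 3)) / r ^ 2) :
    (∀ r t : ℝ, 0 < r → 0 < r ^ 3 + 3 * Z₀ t * r₀ ^ 2 →
      deriv (fun s => F r s) t
        - deriv Z₀ t * (r₀ ^ 2 / r ^ 2) * deriv (fun x => F x t) r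
        = 2 * deriv Z₀ t * (r₀ ^ 2 / r ^ 3) * F r t)
    ∧ (∀ r > (0 : ℝ), F r 0 = F₀ r) := by
  subst hF
  constructor
  · intro r t hr hu
    set u : ℝ := r ^ 3 + 3 * Z₀ t * r₀ ^ 2 with hu_def
    have hu13 : 0 < u ^ ((1:ℝ)/3) := Real.rpow_pos_of_pos hu _
    have h23 : HasDerivAt (fun x : ℝ => x ^ ((2:ℝ)/3)) (((2:ℝ)/3) * u ^ ((2:ℝ)/3 - 1)) u :=
      Real.hasDerivAt_rpow_const (Or.inl hu.ne')
    have h13 : HasDerivAt (fun x : ℝ => x ^ ((1:ℝ)/3)) (((1:ℝ)/3) * u ^ ((1:ℝ)/3 - 1)) u :=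
      Real.hasDerivAt_rpow_const (Or.inl hu.ne')
    have hF₀' : HasDerivAt F₀ (deriv F₀ (u ^ ((1:ℝ)/3))) (u ^ ((1:ℝ)/3)) :=
      (hF₀ _ hu13).hasDerivAt
    set d : ℝ := ((2:ℝ)/3) * u ^ ((2:ℝ)/3 - 1) * F₀ (u ^ ((1:ℝ)/3))
        + u ^ ((2:ℝ)/3) * (deriv F₀ (u ^ ((1:ℝ)/3)) * (((1:ℝ)/3) * u ^ ((1:ℝ)/3 - 1))) with hd_def
    have hGd : HasDerivAt (fun x : ℝ => x ^ ((2:ℝ)/3) * F₀ (x ^ ((1:ℝ)/3))) d u :=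
      h23.mul (hF₀'.comp u h13)
    -- time derivative
    have hin_t : HasDerivAt (fun s => r ^ 3 + 3 * Z₀ s * r₀ ^ 2)
        (3 * deriv Z₀ t * r₀ ^ 2) t :=
      ((((hZ t).hasDerivAt).const_mul 3).mul_const (r₀ ^ 2)).const_add (r ^ 3)
    have ht : HasDerivAt (fun s => (r ^ 3 + 3 * Z₀ s * r₀ ^ 2) ^ ((2 : ℝ) / 3)
        * F₀ ((r ^ 3 + 3 * Z₀ s * r₀ ^ 2) ^ ((1 : ℝ) / 3)) / r ^ 2)
        (d * (3 * deriv Z₀ t * r₀ ^ 2) / r ^ 2) t :=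
      (hGd.comp t hin_t).div_const _
    -- space derivative
    have hin_r : HasDerivAt (fun x : ℝ => x ^ 3 + 3 * Z₀ t * r₀ ^ 2) (3 * r ^ 2) r := by
      simpa using (hasDerivAt_pow 3 r).add_const (3 * Z₀ t * r₀ ^ 2)
    have hden : HasDerivAt (fun x : ℝ => x ^ 2) (2 * r) r := by
      simpa using hasDerivAt_pow 2 r
    have hx : HasDerivAt (fun x => (x ^ 3 + 3 * Z₀ t * r₀ ^ 2) ^ ((2 : ℝ) / 3)
        * F₀ ((x ^ 3 + 3 * Z₀ t * r₀ ^ 2) ^ ((1 : ℝ) / 3)) / x ^ 2)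
        ((d * (3 * r ^ 2) * r ^ 2
          - u ^ ((2:ℝ)/3) * F₀ (u ^ ((1:ℝ)/3)) * (2 * r)) / (r ^ 2) ^ 2) r :=
      by have := (hGd.comp r hin_r).div hden (pow_ne_zero 2 hr.ne'); exact this
    rw [ht.deriv, hx.deriv]
    have hrne : r ≠ 0 := hr.ne'
    simp only [← hu_def]
    field_simp
    ring
  · intro r hr
    have h3 : (r : ℝ) ^ 3 = r ^ ((3:ℕ):ℝ) := (Real.rpow_natCast r 3).symm
    have e1 : (r ^ 3 : ℝ) ^ ((1:ℝ)/3) = r := by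
      rw [h3, ← Real.rpow_mul hr.le]
      norm_num
    have e2 : (r ^ 3 : ℝ) ^ ((2:ℝ)/3) = r ^ 2 := by
      rw [h3, ← Real.rpow_mul hr.le, show ((3:ℕ):ℝ) * (2/3) = ((2:ℕ):ℝ) by norm_num,
        Real.rpow_natCast]
    simp only [hZ0]
    norm_num [e1, e2]
    field_simp
end

section
/- Let R₀ > 0 and let a : ℝ → (0,∞) be differentiable with a(0) = R₀. On the region D = {(r,t) : r > 0, R₀² − a(t)² + r² > 0}, define F(r,t) = √(R₀² − a(t)² + r²)/r and H(r,t) = r/√(R₀² − a(t)² + r²). Then F satisfies ∂F/∂t + (a a'/r) ∂F/∂r = −(a a'/r²) F on D, H satisfies ∂H/∂t + (a a'/r) ∂H/∂r = (a a'/r²) H on D, and F(r,0) = H(r,0) = 1 for all r > 0. (These are the elastic deformation components F_e,rr and F_e,θθ of the initially present, initially stress-free material of the cylinder.) -/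
/-- In the cylindrical accretion problem, the elastic deformation components of the
initially present, initially stress-free material,
`F(r,t) = √(R₀² − a(t)² + r²)/r` and `H(r,t) = r/√(R₀² − a(t)² + r²)`,
satisfy their respective transport equations on the region
`{(r,t) : r > 0, R₀² − a(t)² + r² > 0}`, with initial conditions `F(r,0) = H(r,0) = 1`. -/
theorem cylindrical_accretion_initial_region
    (R₀ : ℝ) (hR₀ : 0 < R₀)
    (a : ℝ → ℝ) (ha : Differentiable ℝ a) (hapos : ∀ t : ℝ, 0 < a t) (ha0 : a 0 = R₀)
    (F H : ℝ → ℝ → ℝ)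
    (hF : F = fun r t => Real.sqrt (R₀ ^ 2 - a t ^ 2 + r ^ 2) / r)
    (hH : H = fun r t => r / Real.sqrt (R₀ ^ 2 - a t ^ 2 + r ^ 2)) :
    (∀ r t : ℝ, 0 < r → 0 < R₀ ^ 2 - a t ^ 2 + r ^ 2 →
      deriv (fun s => F r s) t
        + a t * deriv a t / r * deriv (fun x => F x t) r
        = -(a t * deriv a t / r ^ 2) * F r t)
    ∧ (∀ r t : ℝ, 0 < r → 0 < R₀ ^ 2 - a t ^ 2 + r ^ 2 →
      deriv (fun s => H r s) t
        + a t * deriv a t / r * deriv (fun x => H x t) r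
        = a t * deriv a t / r ^ 2 * H r t)
    ∧ (∀ r > (0 : ℝ), F r 0 = 1 ∧ H r 0 = 1) := by
  subst hF hH
  have key : ∀ r t : ℝ, 0 < r → 0 < R₀ ^ 2 - a t ^ 2 + r ^ 2 →
      ∃ s : ℝ, 0 < s ∧ s ^ 2 = R₀ ^ 2 - a t ^ 2 + r ^ 2 ∧
      HasDerivAt (fun τ => Real.sqrt (R₀ ^ 2 - a τ ^ 2 + r ^ 2) / r)
        (1 / (2 * s) * (-(2 * a t * deriv a t)) / r) t ∧
      HasDerivAt (fun x => Real.sqrt (R₀ ^ 2 - a t ^ 2 + x ^ 2) / x)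
        ((1 / (2 * s) * (2 * r) * r - s * 1) / r ^ 2) r ∧
      HasDerivAt (fun τ => r / Real.sqrt (R₀ ^ 2 - a τ ^ 2 + r ^ 2))
        ((0 * s - r * (1 / (2 * s) * (-(2 * a t * deriv a t)))) / s ^ 2) t ∧
      HasDerivAt (fun x => x / Real.sqrt (R₀ ^ 2 - a t ^ 2 + x ^ 2))
        ((1 * s - r * (1 / (2 * s) * (2 * r))) / s ^ 2) r := by
    intro r t hr hu
    set u : ℝ := R₀ ^ 2 - a t ^ 2 + r ^ 2 with hu_def
    have hs : 0 < Real.sqrt u := Real.sqrt_pos.mpr hu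
    have h1t : HasDerivAt (fun τ => R₀ ^ 2 - a τ ^ 2 + r ^ 2)
        (-(2 * a t * deriv a t)) t := by
      have h2 := (((ha t).hasDerivAt.pow 2).const_sub (R₀ ^ 2)).add_const (r ^ 2)
      refine h2.congr_deriv ?_
      push_cast; ring
    have h1r : HasDerivAt (fun x : ℝ => R₀ ^ 2 - a t ^ 2 + x ^ 2) (2 * r) r := by
      have h2 := (hasDerivAt_pow 2 r).const_add (R₀ ^ 2 - a t ^ 2)
      refine h2.congr_deriv ?_
      norm_num
    have h3t := (Real.hasDerivAt_sqrt hu.ne').comp t h1t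
    have h3r := (Real.hasDerivAt_sqrt hu.ne').comp r h1r
    refine ⟨Real.sqrt u, hs, Real.sq_sqrt hu.le, ?_, ?_, ?_, ?_⟩
    · exact h3t.div_const r
    · exact h3r.div (hasDerivAt_id r) hr.ne'
    · exact (hasDerivAt_const t r).div h3t hs.ne'
    · exact (hasDerivAt_id r).div h3r hs.ne'
  refine ⟨?_, ?_, ?_⟩
  · intro r t hr hu
    obtain ⟨s, hs, hsq, hFt, hFr, _, _⟩ := key r t hr hu
    rw [hFt.deriv, hFr.deriv]
    have hsr : Real.sqrt (R₀ ^ 2 - a t ^ 2 + r ^ 2) = s := by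
      rw [← hsq, Real.sqrt_sq hs.le]
    simp only [hsr]
    field_simp
    nlinarith [hsq, sq_nonneg s, sq_nonneg r]
  · intro r t hr hu
    obtain ⟨s, hs, hsq, _, _, hHt, hHr⟩ := key r t hr hu
    rw [hHt.deriv, hHr.deriv]
    have hsr : Real.sqrt (R₀ ^ 2 - a t ^ 2 + r ^ 2) = s := by
      rw [← hsq, Real.sqrt_sq hs.le]
    simp only [hsr]
    field_simp
    nlinarith [hsq]
  · intro r hr
    simp only [ha0]
    have h : R₀ ^ 2 - R₀ ^ 2 + r ^ 2 = r ^ 2 := by ring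
    rw [h, Real.sqrt_sq hr.le]
    exact ⟨div_self hr.ne', div_self hr.ne'⟩
end
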